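/- For any monopoly-free set system (E,F), any nonnegative cost vector c, and any cheapest feasible set S, the total VCG payment is at least NTUmax(c,S); that is, ∑_{e∈S} min{ c_e + c(T) − c(S) : T ∈ F, e ∉ T } ≥ NTUmax(c,S). -/
import Mathlib


open Finset

/-- A set system `(E, F)` is monopoly-free if no element of the ground set
belongs to every feasible set. -/
def MonopolyFree {E : Type*} (F : Set (Finset E)) : Prop :=
  ∀ e : E, ∃ T ∈ F, e ∉ T

/-- `S` is a cheapest feasible set of the set system `(E, F)` with respect to
the cost vector `c`. -/
def IsCheapest {E : Type*} (F : Set (Finset E)) (c : E → ℝ) (S : Finset E) : Prop :=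
  S ∈ F ∧ ∀ T ∈ F, ∑ e ∈ S, c e ≤ ∑ e ∈ T, c e

/-- Bid vectors satisfying conditions (1), (2) and (3). -/
def BidsNTU {E : Type*} [DecidableEq E] (F : Set (Finset E)) (c : E → ℝ) (S : Finset E) :
    Set (E → ℝ) :=
  {b | (∀ e ∈ S, c e ≤ b e) ∧
       (∀ T ∈ F, ∑ e ∈ S \ T, b e ≤ ∑ e ∈ T \ S, c e) ∧
       (∀ e ∈ S, ∃ T ∈ F, e ∉ T ∧ ∑ e' ∈ S \ T, b e' = ∑ e' ∈ T \ S, c e')}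

/-- Bid vectors satisfying conditions (1*), (2) and (3). -/
def BidsTU {E : Type*} [DecidableEq E] (F : Set (Finset E)) (c : E → ℝ) (S : Finset E) :
    Set (E → ℝ) :=
  {b | (∀ e ∈ S, 0 ≤ b e) ∧
       (∀ T ∈ F, ∑ e ∈ S \ T, b e ≤ ∑ e ∈ T \ S, c e) ∧
       (∀ e ∈ S, ∃ T ∈ F, e ∉ T ∧ ∑ e' ∈ S \ T, b e' = ∑ e' ∈ T \ S, c e')}

noncomputable def NTUmin {E : Type*} [DecidableEq E] (F : Set (Finset E)) (c : E → ℝ)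
    (S : Finset E) : ℝ :=
  sInf ((fun b => ∑ e ∈ S, b e) '' BidsNTU F c S)

noncomputable def NTUmax {E : Type*} [DecidableEq E] (F : Set (Finset E)) (c : E → ℝ)
    (S : Finset E) : ℝ :=
  sSup ((fun b => ∑ e ∈ S, b e) '' BidsNTU F c S)

noncomputable def TUmin {E : Type*} [DecidableEq E] (F : Set (Finset E)) (c : E → ℝ)
    (S : Finset E) : ℝ :=
  sInf ((fun b => ∑ e ∈ S, b e) '' BidsTU F c S)

noncomputable def TUmax {E : Type*} [DecidableEq E] (F : Set (Finset E)) (c : E → ℝ)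
    (S : Finset E) : ℝ :=
  sSup ((fun b => ∑ e ∈ S, b e) '' BidsTU F c S)

/-- The VCG payment to a winner `e` of the winning set `S`. -/
noncomputable def vcgPayment {E : Type*} (F : Set (Finset E)) (c : E → ℝ)
    (S : Finset E) (e : E) : ℝ :=
  sInf {x : ℝ | ∃ T ∈ F, e ∉ T ∧ x = c e + (∑ e' ∈ T, c e') - ∑ e' ∈ S, c e'}

theorem vcg_payment_ge_ntumax {E : Type*} [DecidableEq E] (F : Set (Finset E))
    (c : E → ℝ) (S : Finset E) (hmf : MonopolyFree F) (hc : ∀ e, 0 ≤ c e)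
    (hS : IsCheapest F c S) :
    NTUmax F c S ≤ ∑ e ∈ S, vcgPayment F c S e := by
  have hpay_nonneg : 0 ≤ ∑ e ∈ S, vcgPayment F c S e := by
    apply Finset.sum_nonneg
    intro e _
    apply Real.sInf_nonneg
    rintro x ⟨T, hT, heT, rfl⟩
    have h1 := hS.2 T hT
    have h2 := hc e
    linarith
  apply Real.sSup_le _ hpay_nonneg
  rintro x ⟨b, ⟨hb1, hb2, _⟩, rfl⟩
  apply Finset.sum_le_sum
  intro e he
  apply le_csInf
  · obtain ⟨T, hT, heT⟩ := hmf e
    exact ⟨_, T, hT, heT, rfl⟩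
  · rintro x ⟨T, hT, heT, rfl⟩
    have h2 := hb2 T hT
    have heST : e ∈ S \ T := Finset.mem_sdiff.mpr ⟨he, heT⟩
    have hsplit : b e + ∑ e' ∈ (S \ T).erase e, b e' = ∑ e' ∈ S \ T, b e' :=
      Finset.add_sum_erase _ _ heST
    have hsplitc : c e + ∑ e' ∈ (S \ T).erase e, c e' = ∑ e' ∈ S \ T, c e' :=
      Finset.add_sum_erase _ _ heST
    have hbc : ∑ e' ∈ (S \ T).erase e, c e' ≤ ∑ e' ∈ (S \ T).erase e, b e' := by
      apply Finset.sum_le_sum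
      intro i hi
      exact hb1 i (Finset.mem_sdiff.mp (Finset.mem_of_mem_erase hi)).1
    have hT' : ∑ e' ∈ T ∩ S, c e' + ∑ e' ∈ T \ S, c e' = ∑ e' ∈ T, c e' :=
      Finset.sum_inter_add_sum_sdiff T S c
    have hS' : ∑ e' ∈ S ∩ T, c e' + ∑ e' ∈ S \ T, c e' = ∑ e' ∈ S, c e' :=
      Finset.sum_inter_add_sum_sdiff S T c
    have hcomm : ∑ e' ∈ T ∩ S, c e' = ∑ e' ∈ S ∩ T, c e' := by
      rw [Finset.inter_comm]
    linarith
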